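/- Let d ≥ 1, x₀ ∈ ℝ^d, T > 0, λ > 0, and let f : ℝ^d → ℝ be any function. Then the infimum over u ∈ L²([0,T]; ℝ^d) of J(u) = f(x₀ + ∫₀^T u(t) dt) + (λ/(2T)) ∫₀^T ‖u(t)‖² dt equals the infimum over y ∈ ℝ^d of f(y) + (λ/(2T²)) ‖y − x₀‖². Moreover, if y* ∈ ℝ^d minimizes y ↦ f(y) + (λ/(2T²)) ‖y − x₀‖², then the constant control u(t) = (y* − x₀)/T attains the left-hand infimum. -/

import Mathlib

open MeasureTheory Real Filter Topology

noncomputable section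

/-- The deterministic finite-horizon control cost
`J(u) = f(x₀ + ∫₀^T u(t) dt) + (λ/(2T)) ∫₀^T ‖u(t)‖² dt`. -/
def ctrlCost (d : ℕ) (x₀ : EuclideanSpace ℝ (Fin d)) (T lam : ℝ)
    (f : EuclideanSpace ℝ (Fin d) → ℝ) (u : ℝ → EuclideanSpace ℝ (Fin d)) : ℝ :=
  f (x₀ + ∫ t in (0:ℝ)..T, u t) + lam / (2 * T) * ∫ t in (0:ℝ)..T, ‖u t‖ ^ 2

/-- The proximal endpoint cost `f(y) + (λ/(2T²)) ‖y − x₀‖²`. -/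
def proxCost (d : ℕ) (x₀ : EuclideanSpace ℝ (Fin d)) (T lam : ℝ)
    (f : EuclideanSpace ℝ (Fin d) → ℝ) (y : EuclideanSpace ℝ (Fin d)) : ℝ :=
  f y + lam / (2 * T ^ 2) * ‖y - x₀‖ ^ 2

-- Cauchy–Schwarz: ‖∫ u dμ‖² ≤ T * ∫ ‖u‖² dμ on Ioc 0 T
lemma key_cs (d : ℕ) (T : ℝ) (hT : 0 < T) (u : ℝ → EuclideanSpace ℝ (Fin d))
    (hu : MemLp u 2 (volume.restrict (Set.Ioc 0 T))) :
    ‖∫ t in Set.Ioc (0:ℝ) T, u t‖ ^ 2 ≤ T * ∫ t in Set.Ioc (0:ℝ) T, ‖u t‖ ^ 2 := by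
  haveI : Fact (volume (Set.Ioc (0:ℝ) T) < ⊤) := ⟨measure_Ioc_lt_top⟩
  set μ := volume.restrict (Set.Ioc (0:ℝ) T) with hμ
  have hpq : (2:ℝ).HolderConjugate 2 := by constructor <;> norm_num
  have hf : MemLp (fun t => ‖u t‖) (ENNReal.ofReal 2) μ := by
    have : (ENNReal.ofReal 2) = (2 : ENNReal) := by simp [ENNReal.ofReal_ofNat]
    rw [this]; exact hu.norm
  have hg : MemLp (fun _ : ℝ => (1:ℝ)) (ENNReal.ofReal 2) μ := memLp_const 1
  have hH := integral_mul_le_Lp_mul_Lq_of_nonneg hpq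
    (Filter.Eventually.of_forall fun t => norm_nonneg (u t))
    (Filter.Eventually.of_forall fun _ => zero_le_one) hf hg
  have hμT : (μ Set.univ).toReal = T := by
    simp [hμ, Real.volume_Ioc, hT.le, ENNReal.toReal_ofReal]
  have hint1 : ∫ _ : ℝ, (1:ℝ) ^ (2:ℝ) ∂μ = T := by
    simp only [Real.one_rpow]
    rw [integral_const]; simp [Measure.real, hμT]
  have hintu : ∫ t, ‖u t‖ ^ (2:ℝ) ∂μ = ∫ t, ‖u t‖ ^ 2 ∂μ := by
    refine integral_congr_ae (Filter.Eventually.of_forall fun t => ?_)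
    exact Real.rpow_two _
  rw [hint1, hintu] at hH
  simp only [mul_one] at hH
  set A := ∫ t, ‖u t‖ ∂μ
  set B := ∫ t, ‖u t‖ ^ 2 ∂μ
  have hB : 0 ≤ B := integral_nonneg fun t => by positivity
  have h1 : ‖∫ t, u t ∂μ‖ ≤ A := norm_integral_le_integral_norm u
  have h2 : A ≤ Real.sqrt B * Real.sqrt T := by
    rw [Real.sqrt_eq_rpow, Real.sqrt_eq_rpow]; exact hH
  have h3 : ‖∫ t, u t ∂μ‖ ^ 2 ≤ (Real.sqrt B * Real.sqrt T) ^ 2 := by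
    have := (h1.trans h2)
    exact pow_le_pow_left₀ (norm_nonneg _) this 2
  calc ‖∫ t, u t ∂μ‖ ^ 2 ≤ (Real.sqrt B * Real.sqrt T) ^ 2 := h3
    _ = B * T := by rw [mul_pow, Real.sq_sqrt hB, Real.sq_sqrt hT.le]
    _ = T * B := mul_comm _ _

lemma const_ctrl (d : ℕ) (x₀ : EuclideanSpace ℝ (Fin d)) (T lam : ℝ) (hT : 0 < T)
    (f : EuclideanSpace ℝ (Fin d) → ℝ) (y : EuclideanSpace ℝ (Fin d)) :
    ctrlCost d x₀ T lam f (fun _ => T⁻¹ • (y - x₀)) = proxCost d x₀ T lam f y := by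
  have hT' : T ≠ 0 := hT.ne'
  have h1 : (∫ _ in (0:ℝ)..T, T⁻¹ • (y - x₀)) = y - x₀ := by
    rw [intervalIntegral.integral_const, sub_zero, smul_smul, mul_inv_cancel₀ hT', one_smul]
  have h2 : (∫ _ in (0:ℝ)..T, ‖T⁻¹ • (y - x₀)‖ ^ 2) = T * (T⁻¹ * ‖y - x₀‖) ^ 2 := by
    rw [intervalIntegral.integral_const, sub_zero, norm_smul, norm_inv, Real.norm_eq_abs,
      abs_of_pos hT, smul_eq_mul]
  unfold ctrlCost proxCost
  rw [h1, h2, add_sub_cancel]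
  congr 1
  field_simp

theorem deterministic_warmup (d : ℕ) (hd : 1 ≤ d)
    (x₀ : EuclideanSpace ℝ (Fin d)) (T lam : ℝ) (hT : 0 < T) (hlam : 0 < lam)
    (f : EuclideanSpace ℝ (Fin d) → ℝ) :
    sInf {v : ℝ | ∃ u : ℝ → EuclideanSpace ℝ (Fin d),
        MemLp u 2 (volume.restrict (Set.Ioc 0 T)) ∧ v = ctrlCost d x₀ T lam f u}
      = sInf {v : ℝ | ∃ y : EuclideanSpace ℝ (Fin d), v = proxCost d x₀ T lam f y} ∧
    ∀ ystar : EuclideanSpace ℝ (Fin d),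
      (∀ y, proxCost d x₀ T lam f ystar ≤ proxCost d x₀ T lam f y) →
      ctrlCost d x₀ T lam f (fun _ => T⁻¹ • (ystar - x₀))
        = sInf {v : ℝ | ∃ u : ℝ → EuclideanSpace ℝ (Fin d),
            MemLp u 2 (volume.restrict (Set.Ioc 0 T)) ∧ v = ctrlCost d x₀ T lam f u} := by
  haveI : Fact (volume (Set.Ioc (0:ℝ) T) < ⊤) := ⟨measure_Ioc_lt_top⟩
  set S₁ := {v : ℝ | ∃ u : ℝ → EuclideanSpace ℝ (Fin d),
      MemLp u 2 (volume.restrict (Set.Ioc 0 T)) ∧ v = ctrlCost d x₀ T lam f u} with hS₁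
  set S₂ := {v : ℝ | ∃ y : EuclideanSpace ℝ (Fin d), v = proxCost d x₀ T lam f y} with hS₂
  -- key inequality: each control cost dominates a prox cost
  have hineq : ∀ u : ℝ → EuclideanSpace ℝ (Fin d),
      MemLp u 2 (volume.restrict (Set.Ioc 0 T)) →
      proxCost d x₀ T lam f (x₀ + ∫ t in (0:ℝ)..T, u t) ≤ ctrlCost d x₀ T lam f u := by
    intro u hu
    have hcs := key_cs d T hT u hu
    have hrw : (∫ t in (0:ℝ)..T, u t) = ∫ t in Set.Ioc (0:ℝ) T, u t :=
      intervalIntegral.integral_of_le hT.le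
    have hrw2 : (∫ t in (0:ℝ)..T, ‖u t‖ ^ 2) = ∫ t in Set.Ioc (0:ℝ) T, ‖u t‖ ^ 2 :=
      intervalIntegral.integral_of_le hT.le
    unfold proxCost ctrlCost
    rw [add_sub_cancel_left, hrw, hrw2]
    gcongr f _ + ?_
    have hc : lam / (2 * T ^ 2) * (T * ∫ t in Set.Ioc (0:ℝ) T, ‖u t‖ ^ 2)
        = lam / (2 * T) * ∫ t in Set.Ioc (0:ℝ) T, ‖u t‖ ^ 2 := by
      field_simp
    rw [← hc]
    have hpos : 0 ≤ lam / (2 * T ^ 2) := by positivity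
    exact mul_le_mul_of_nonneg_left hcs hpos
  have hsub : S₂ ⊆ S₁ := by
    rintro v ⟨y, rfl⟩
    exact ⟨fun _ => T⁻¹ • (y - x₀), memLp_const _, (const_ctrl d x₀ T lam hT f y).symm⟩
  have hdom : ∀ v ∈ S₁, ∃ w ∈ S₂, w ≤ v := by
    rintro v ⟨u, hu, rfl⟩
    exact ⟨proxCost d x₀ T lam f (x₀ + ∫ t in (0:ℝ)..T, u t), ⟨_, rfl⟩, hineq u hu⟩
  have hne2 : S₂.Nonempty := ⟨proxCost d x₀ T lam f x₀, x₀, rfl⟩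
  have hne1 : S₁.Nonempty := ⟨_, hsub hne2.choose_spec⟩
  have hmain : sInf S₁ = sInf S₂ := by
    by_cases hbdd : BddBelow S₂
    · obtain ⟨b, hb⟩ := hbdd
      have hbdd1 : BddBelow S₁ := ⟨b, fun v hv => by
        obtain ⟨w, hw, hwv⟩ := hdom v hv
        exact (hb hw).trans hwv⟩
      refine le_antisymm (csInf_le_csInf hbdd1 hne2 hsub) ?_
      refine le_csInf hne1 fun v hv => ?_
      obtain ⟨w, hw, hwv⟩ := hdom v hv
      exact (csInf_le ⟨b, hb⟩ hw).trans hwv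
    · have hbdd1 : ¬ BddBelow S₁ := fun h => hbdd (h.mono hsub)
      rw [Real.sInf_of_not_bddBelow hbdd1, Real.sInf_of_not_bddBelow hbdd]
  refine ⟨hmain, fun ystar hmin => ?_⟩
  have h2 : sInf S₂ = proxCost d x₀ T lam f ystar := by
    refine le_antisymm (csInf_le ⟨proxCost d x₀ T lam f ystar, ?_⟩ ⟨ystar, rfl⟩) ?_
    · rintro v ⟨y, rfl⟩; exact hmin y
    · refine le_csInf hne2 ?_
      rintro v ⟨y, rfl⟩; exact hmin y
  rw [const_ctrl d x₀ T lam hT f ystar, hmain, h2]
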